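/- For every real λ ≥ 1, ∫_{-2}^{2} cos[(1 - 1/λ) arcsin(x/2)] (4-x²)^{-1/(2λ)} dx = 2^{1-1/λ} √π Γ(1 - 1/(2λ)) Γ(3/2 - 1/(2λ)) / Γ(2 - 1/λ). -/

import Mathlib

open Set MeasureTheory Filter Topology Finset

noncomputable def bc (a : ℝ) (n : ℕ) : ℝ := (∏ i ∈ Finset.range n, (a - i)) / n.factorial

lemma bc_zero (a : ℝ) : bc a 0 = 1 := by simp [bc]

lemma bc_succ (a : ℝ) (n : ℕ) : bc a (n + 1) = bc a n * ((a - n) / (n + 1)) := by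
  have h1 : (n.factorial : ℝ) ≠ 0 := Nat.cast_ne_zero.2 n.factorial_ne_zero
  have h2 : ((n : ℝ) + 1) ≠ 0 := by positivity
  rw [bc, bc, Finset.prod_range_succ, Nat.factorial_succ, div_mul_div_comm]
  push_cast
  ring

lemma bc_one (a : ℝ) : bc a 1 = a := by
  rw [show (1:ℕ) = 0 + 1 from rfl, bc_succ, bc_zero]; simp

lemma abs_bc_succ {a : ℝ} (ha1 : a < 1) {n : ℕ} (hn : 1 ≤ n) :
    ((n : ℝ) + 1) * |bc a (n + 1)| = ((n : ℝ) - a) * |bc a n| := by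
  have hna : a - (n : ℝ) ≤ 0 := by
    have : (1 : ℝ) ≤ n := by exact_mod_cast hn
    linarith
  rw [bc_succ, abs_mul, abs_div, abs_of_nonpos hna, abs_of_pos (by positivity : (0:ℝ) < (n:ℝ)+1)]
  field_simp
  ring

lemma sum_abs_bc_ident {a : ℝ} (ha0 : 0 ≤ a) (ha1 : a < 1) (N : ℕ) (hN : 1 ≤ N) :
    a * ∑ n ∈ Finset.Ico 1 N, |bc a n| + (N : ℝ) * |bc a N| = a := by
  induction N with
  | zero => omega
  | succ N ih =>
    rcases Nat.lt_or_ge N 1 with h | h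
    · interval_cases N
      simp [bc_one, abs_of_nonneg ha0]
    · have := ih h
      rw [Finset.sum_Ico_succ_top h, mul_add]
      have habs := abs_bc_succ ha1 h
      push_cast at habs ⊢
      linarith

lemma sum_abs_bc_le {a : ℝ} (ha0 : 0 ≤ a) (ha1 : a < 1) (N : ℕ) :
    ∑ n ∈ Finset.range N, |bc a n| ≤ 2 := by
  rcases Nat.lt_or_ge N 1 with h | h
  · interval_cases N <;> simp
  · have hsplit : ∑ n ∈ Finset.range N, |bc a n| =
        |bc a 0| + ∑ n ∈ Finset.Ico 1 N, |bc a n| := by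
      rw [Finset.range_eq_Ico, Finset.sum_eq_sum_Ico_succ_bot (by omega)]
    have hIco : ∑ n ∈ Finset.Ico 1 N, |bc a n| ≤ 1 := by
      rcases eq_or_lt_of_le ha0 with rfl | hapos
      · have : ∀ n ∈ Finset.Ico 1 N, |bc 0 n| = 0 := by
          intro n hn
          simp only [Finset.mem_Ico] at hn
          have : bc 0 n = 0 := by
            rw [bc]
            rw [Finset.prod_eq_zero (Finset.mem_range.2 (by omega : 0 < n))]
            · simp
            · simp
          simp [this]
        rw [Finset.sum_congr rfl this]
        simp
      · have hid := sum_abs_bc_ident ha0 ha1 N h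
        have hnn : (0:ℝ) ≤ (N : ℝ) * |bc a N| := by positivity
        nlinarith
    rw [hsplit, bc_zero]
    simp only [abs_one]
    linarith

lemma summable_abs_bc {a : ℝ} (ha0 : 0 ≤ a) (ha1 : a < 1) :
    Summable (fun n => |bc a n|) :=
  summable_of_sum_range_le (fun _ => abs_nonneg _) (sum_abs_bc_le ha0 ha1)

lemma abs_bc_le_two {a : ℝ} (ha0 : 0 ≤ a) (ha1 : a < 1) (n : ℕ) : |bc a n| ≤ 2 := by
  have h := sum_abs_bc_le ha0 ha1 (n + 1)
  have : |bc a n| ≤ ∑ k ∈ Finset.range (n+1), |bc a k| :=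
    Finset.single_le_sum (f := fun k => |bc a k|) (fun k _ => abs_nonneg _) (Finset.self_mem_range_succ n)
  linarith

section ComplexSeries

open Complex

variable {a : ℝ} {w : ℂ}

noncomputable def Sf (a : ℝ) (w : ℂ) (t : ℝ) : ℂ := ∑' n, (bc a n : ℂ) * (t : ℂ) ^ n * w ^ n

lemma summable_term (ha0 : 0 ≤ a) (ha1 : a < 1) (hw : ‖w‖ = 1) {t : ℝ} (ht : |t| ≤ 1) :
    Summable (fun n => (bc a n : ℂ) * (t : ℂ) ^ n * w ^ n) := by
  apply Summable.of_norm_bounded (summable_abs_bc ha0 ha1)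
  intro n
  rw [norm_mul, norm_mul, norm_pow, norm_pow, hw, one_pow, mul_one, Complex.norm_real,
    Complex.norm_real, Real.norm_eq_abs, Real.norm_eq_abs]
  calc |bc a n| * |t| ^ n ≤ |bc a n| * 1 ^ n := by
        gcongr
    _ = |bc a n| := by simp

lemma deriv_term_norm_le (ha0 : 0 ≤ a) (ha1 : a < 1) (hw : ‖w‖ = 1) {r y : ℝ}
    (hr : 1 / 2 ≤ r) (hy : |y| ≤ r) (n : ℕ) :
    ‖(bc a n : ℂ) * (((n : ℝ) * y ^ (n - 1) : ℝ) : ℂ) * w ^ n‖ ≤ 4 * ((n : ℝ) * r ^ n) := by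
  have hrpos : 0 < r := lt_of_lt_of_le (by norm_num) hr
  have hb := abs_bc_le_two ha0 ha1 n
  rw [norm_mul, norm_mul, norm_pow, hw, one_pow, mul_one, Complex.norm_real,
    Complex.norm_real, Real.norm_eq_abs, Real.norm_eq_abs]
  cases n with
  | zero => simp
  | succ m =>
    simp only [Nat.add_sub_cancel]
    rw [_root_.abs_mul, _root_.abs_pow]
    have h1 : |((m + 1 : ℕ) : ℝ)| = (m : ℝ) + 1 := by
      rw [_root_.abs_of_nonneg (by positivity)]; push_cast; ring
    rw [h1]
    have h2 : |y| ^ m ≤ r ^ m := pow_le_pow_left₀ (abs_nonneg y) hy m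
    have h3 : r ^ m ≤ 2 * r ^ (m + 1) := by
      rw [pow_succ]
      nlinarith [pow_nonneg hrpos.le m, pow_pos hrpos m]
    push_cast
    calc |bc a (m + 1)| * (((m : ℝ) + 1) * |y| ^ m)
        ≤ 2 * (((m : ℝ) + 1) * r ^ m) := by
          apply mul_le_mul hb ?_ (by positivity) (by norm_num)
          gcongr
      _ ≤ 2 * (((m : ℝ) + 1) * (2 * r ^ (m + 1))) := by gcongr
      _ = 4 * (((m : ℝ) + 1) * r ^ (m + 1)) := by ring

lemma summable_four_mul_geom {r : ℝ} (hr0 : 0 < r) (hr1 : r < 1) :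
    Summable (fun n : ℕ => 4 * ((n : ℝ) * r ^ n)) := by
  apply Summable.mul_left
  have := summable_pow_mul_geometric_of_norm_lt_one (R := ℝ) 1
    (r := r) (by rw [Real.norm_eq_abs, _root_.abs_of_pos hr0]; exact hr1)
  simpa using this

lemma summable_deriv_term (ha0 : 0 ≤ a) (ha1 : a < 1) (hw : ‖w‖ = 1) {t r : ℝ}
    (hr : 1 / 2 ≤ r) (hr1 : r < 1) (ht : |t| ≤ r) :
    Summable (fun n => (bc a n : ℂ) * (((n : ℝ) * t ^ (n - 1) : ℝ) : ℂ) * w ^ n) := by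
  have hrpos : 0 < r := lt_of_lt_of_le (by norm_num) hr
  exact Summable.of_norm_bounded (summable_four_mul_geom hrpos hr1)
    (deriv_term_norm_le ha0 ha1 hw hr ht)

lemma hasDerivAt_Sf (ha0 : 0 ≤ a) (ha1 : a < 1) (hw : ‖w‖ = 1) {t : ℝ} (ht : |t| < 1) :
    HasDerivAt (Sf a w)
      (∑' n, (bc a n : ℂ) * (((n : ℝ) * t ^ (n - 1) : ℝ) : ℂ) * w ^ n) t := by
  set r : ℝ := (1 + |t|) / 2 with hrdef
  have habs := abs_nonneg t
  have hr0 : 0 < r := by positivity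
  have hrhalf : 1 / 2 ≤ r := by rw [hrdef]; linarith
  have hr1 : r < 1 := by rw [hrdef]; linarith
  have htr : |t| < r := by rw [hrdef]; linarith
  have H := hasDerivAt_tsum_of_isPreconnected (𝕜 := ℝ) (F := ℂ)
    (summable_four_mul_geom hr0 hr1) (isOpen_Ioo (a := -r) (b := r))
    (convex_Ioo _ _).isPreconnected
    (g := fun (n : ℕ) (y : ℝ) => (bc a n : ℂ) * (y : ℂ) ^ n * w ^ n)
    (g' := fun (n : ℕ) (y : ℝ) => (bc a n : ℂ) * (((n : ℝ) * y ^ (n - 1) : ℝ) : ℂ) * w ^ n)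
    ?_ ?_ (y₀ := 0) ?_ ?_ (y := t) (abs_lt.1 htr)
  · exact H
  · intro n y _
    have h := (((hasDerivAt_pow n y).ofReal_comp).const_mul ((bc a n : ℂ))).mul_const (w ^ n)
    simpa only [Complex.ofReal_pow] using h
  · intro n y hy
    exact deriv_term_norm_le ha0 ha1 hw hrhalf (le_of_lt (abs_lt.2 ⟨hy.1, hy.2⟩)) n
  · constructor <;> linarith
  · exact summable_term ha0 ha1 hw (by simp)

lemma one_add_mem_slitPlane (hw : ‖w‖ = 1) {u : ℝ} (hu : |u| < 1) :
    1 + (u : ℂ) * w ∈ Complex.slitPlane := by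
  rw [Complex.mem_slitPlane_iff]
  left
  have hre : (1 + (u : ℂ) * w).re = 1 + u * w.re := by
    simp [Complex.add_re, Complex.mul_re]
  have h1 : |w.re| ≤ 1 := by
    have := Complex.abs_re_le_norm w
    rwa [hw] at this
  have h2 : |u * w.re| ≤ |u| := by
    rw [_root_.abs_mul]
    calc |u| * |w.re| ≤ |u| * 1 := by gcongr
      _ = |u| := mul_one _
  rw [hre]
  have := (abs_le.1 h2).1
  linarith

lemma ode_Sf (ha0 : 0 ≤ a) (ha1 : a < 1) (hw : ‖w‖ = 1) {t : ℝ} (ht : |t| < 1) :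
    (1 + (t : ℂ) * w) * (∑' n, (bc a n : ℂ) * (((n : ℝ) * t ^ (n - 1) : ℝ) : ℂ) * w ^ n)
      = (a : ℂ) * w * Sf a w t := by
  set r : ℝ := (1 + |t|) / 2 with hrdef
  have habs := abs_nonneg t
  have hr0 : 0 < r := by positivity
  have hrhalf : 1 / 2 ≤ r := by rw [hrdef]; linarith
  have hr1 : r < 1 := by rw [hrdef]; linarith
  have htr : |t| ≤ r := by rw [hrdef]; linarith
  have hD := summable_deriv_term ha0 ha1 hw hrhalf hr1 htr
  have hbC : ∀ n : ℕ, (bc a (n + 1) : ℂ) * ((n : ℂ) + 1) = (bc a n : ℂ) * ((a : ℂ) - n) := by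
    intro n
    have hr : bc a (n + 1) * ((n : ℝ) + 1) = bc a n * (a - n) := by
      rw [bc_succ]
      have : ((n : ℝ) + 1) ≠ 0 := by positivity
      field_simp
    exact_mod_cast congrArg (fun x : ℝ => (x : ℂ)) hr
  have hshift : Summable (fun n => (bc a (n + 1) : ℂ) * ((n : ℂ) + 1) * (t : ℂ) ^ n * w ^ (n + 1)) := by
    apply ((summable_nat_add_iff 1).mpr hD).congr
    intro n
    simp only [Nat.add_sub_cancel]
    push_cast
    ring
  have hterm : Summable (fun n => (bc a n : ℂ) * (n : ℂ) * (t : ℂ) ^ n * w ^ (n + 1)) := by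
    apply Summable.of_norm_bounded (summable_four_mul_geom hr0 hr1)
    intro n
    simp only [norm_mul, norm_pow, hw, one_pow, mul_one, Complex.norm_real,
      Complex.norm_natCast, Real.norm_eq_abs]
    have hb := abs_bc_le_two ha0 ha1 n
    have h2 : |t| ^ n ≤ r ^ n := pow_le_pow_left₀ (abs_nonneg t) htr n
    have key : |bc a n| * ((n : ℝ) * |t| ^ n) ≤ 2 * ((n : ℝ) * r ^ n) := by
      apply mul_le_mul hb ?_ (by positivity) (by norm_num)
      gcongr
    have hnn : (0:ℝ) ≤ (n : ℝ) * r ^ n := by positivity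
    linarith [key, hnn]
  have e1 : (∑' n, (bc a n : ℂ) * (((n : ℝ) * t ^ (n - 1) : ℝ) : ℂ) * w ^ n)
      = ∑' n, (bc a (n + 1) : ℂ) * ((n : ℂ) + 1) * (t : ℂ) ^ n * w ^ (n + 1) := by
    rw [hD.tsum_eq_zero_add]
    simp only [Nat.cast_zero, zero_mul, Complex.ofReal_zero, mul_zero, zero_mul, zero_add, pow_zero]
    apply tsum_congr
    intro n
    simp only [Nat.add_sub_cancel]
    push_cast
    ring
  have e2 : (t : ℂ) * w * (∑' n, (bc a n : ℂ) * (((n : ℝ) * t ^ (n - 1) : ℝ) : ℂ) * w ^ n)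
      = ∑' n, (bc a n : ℂ) * (n : ℂ) * (t : ℂ) ^ n * w ^ (n + 1) := by
    rw [← tsum_mul_left]
    apply tsum_congr
    intro n
    cases n with
    | zero => simp
    | succ m =>
      simp only [Nat.add_sub_cancel]
      push_cast
      ring
  calc (1 + (t : ℂ) * w) * (∑' n, (bc a n : ℂ) * (((n : ℝ) * t ^ (n - 1) : ℝ) : ℂ) * w ^ n)
      = (∑' n, (bc a n : ℂ) * (((n : ℝ) * t ^ (n - 1) : ℝ) : ℂ) * w ^ n)
        + (t : ℂ) * w * (∑' n, (bc a n : ℂ) * (((n : ℝ) * t ^ (n - 1) : ℝ) : ℂ) * w ^ n) := by ring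
    _ = ∑' n, ((bc a (n + 1) : ℂ) * ((n : ℂ) + 1) * (t : ℂ) ^ n * w ^ (n + 1)
        + (bc a n : ℂ) * (n : ℂ) * (t : ℂ) ^ n * w ^ (n + 1)) := by
        rw [e2, e1, hshift.tsum_add hterm]
    _ = ∑' n, ((a : ℂ) * w) * ((bc a n : ℂ) * (t : ℂ) ^ n * w ^ n) := by
        apply tsum_congr
        intro n
        have := hbC n
        linear_combination ((t : ℂ) ^ n * w ^ (n + 1)) * this + ((a : ℂ) - n) * (bc a n : ℂ) * (t:ℂ)^n * (pow_succ w n)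
    _ = (a : ℂ) * w * Sf a w t := by rw [tsum_mul_left]; rfl

lemma Sf_eq_cpow (ha0 : 0 ≤ a) (ha1 : a < 1) (hw : ‖w‖ = 1) {t : ℝ} (ht0 : 0 ≤ t) (ht1 : t < 1) :
    Sf a w t = (1 + (t : ℂ) * w) ^ (a : ℂ) := by
  have hne : ∀ u : ℝ, |u| < 1 → (1 + (u : ℂ) * w) ≠ 0 := fun u hu =>
    Complex.slitPlane_ne_zero (one_add_mem_slitPlane hw hu)
  set h : ℝ → ℂ := fun u => Sf a w u * (1 + (u : ℂ) * w) ^ (-(a : ℂ)) with hh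
  have hderiv : ∀ u ∈ Set.Icc (0 : ℝ) t, HasDerivAt h 0 u := by
    intro u hu
    have hu1 : |u| < 1 := by
      rw [abs_lt]; exact ⟨by linarith [hu.1], by linarith [hu.2]⟩
    have hz : HasDerivAt (fun u : ℝ => 1 + (u : ℂ) * w) w u := by
      have := (((hasDerivAt_id u).ofReal_comp).mul_const w).const_add 1
      simpa using this
    have hcpz : HasDerivAt (fun z : ℂ => z ^ (-(a : ℂ)))
        (-(a : ℂ) * (1 + (u : ℂ) * w) ^ (-(a : ℂ) - 1)) (1 + (u : ℂ) * w) :=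
      (Complex.hasStrictDerivAt_cpow_const (one_add_mem_slitPlane hw hu1)).hasDerivAt
    have hcp : HasDerivAt (fun u : ℝ => (1 + (u : ℂ) * w) ^ (-(a : ℂ)))
        (-(a : ℂ) * (1 + (u : ℂ) * w) ^ (-(a : ℂ) - 1) * w) u := by
      have := HasDerivAt.comp u hcpz hz
      simpa [Function.comp_def] using this
    have hmul := (hasDerivAt_Sf ha0 ha1 hw hu1).mul hcp
    convert hmul using 1
    all_goals try rfl
    have hode := ode_Sf ha0 ha1 hw hu1
    have hsplit : (1 + (u : ℂ) * w) ^ (-(a : ℂ))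
        = (1 + (u : ℂ) * w) ^ (-(a : ℂ) - 1) * (1 + (u : ℂ) * w) := by
      conv_lhs => rw [show -(a : ℂ) = (-(a : ℂ) - 1) + 1 by ring]
      rw [Complex.cpow_add _ _ (hne u hu1), Complex.cpow_one]
    rw [hsplit]
    linear_combination (-(1 + (u : ℂ) * w) ^ (-(a : ℂ) - 1)) * hode
  have hcont : ContinuousOn h (Set.Icc 0 t) := fun u hu =>
    (hderiv u hu).continuousAt.continuousWithinAt
  have hconst := constant_of_has_deriv_right_zero hcont
    (fun u hu => (hderiv u (Set.Ico_subset_Icc_self hu)).hasDerivWithinAt)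
    t (Set.right_mem_Icc.2 ht0)
  have hS0 : Sf a w 0 = 1 := by
    rw [Sf, tsum_eq_single 0]
    · simp [bc_zero]
    · intro n hn
      rw [Complex.ofReal_zero, zero_pow hn, mul_zero, zero_mul]
  have h0 : h 0 = 1 := by
    rw [hh]
    simp [hS0, Complex.one_cpow]
  rw [h0] at hconst
  have ht1' : |t| < 1 := by rw [_root_.abs_of_nonneg ht0]; exact ht1
  have hzne : (1 + (t : ℂ) * w) ^ (a : ℂ) ≠ 0 := by
    intro hzero
    exact hne t ht1' ((Complex.cpow_eq_zero_iff _ _).1 hzero).1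
  have : Sf a w t * ((1 + (t : ℂ) * w) ^ (a : ℂ))⁻¹ = 1 := by
    rw [← Complex.cpow_neg]; exact hconst
  rwa [← div_eq_mul_inv, div_eq_one_iff_eq hzne] at this

lemma hasSum_binomial (ha0 : 0 ≤ a) (ha1 : a < 1) (hw : ‖w‖ = 1)
    (hw1 : (1 : ℂ) + w ∈ Complex.slitPlane) :
    HasSum (fun n => (bc a n : ℂ) * w ^ n) ((1 + w) ^ (a : ℂ)) := by
  have hsum : Summable (fun n => (bc a n : ℂ) * w ^ n) := by
    have := summable_term ha0 ha1 hw (t := 1) (by norm_num)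
    simpa using this
  have key : ∑' n, (bc a n : ℂ) * w ^ n = (1 + w) ^ (a : ℂ) := by
    have hIoo : Set.Ioo (0 : ℝ) 1 ∈ 𝓝[<] (1 : ℝ) :=
      Ioo_mem_nhdsLT (by norm_num)
    have T1 : Tendsto (fun t : ℝ => Sf a w t) (𝓝[<] (1 : ℝ))
        (𝓝 (∑' n, (bc a n : ℂ) * w ^ n)) := by
      apply tendsto_tsum_of_dominated_convergence (summable_abs_bc ha0 ha1)
      · intro n
        have hc : Continuous (fun t : ℝ => (bc a n : ℂ) * (t : ℂ) ^ n * w ^ n) := by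
          continuity
        have h2 : Tendsto (fun t : ℝ => (bc a n : ℂ) * (t : ℂ) ^ n * w ^ n) (𝓝[<] (1:ℝ))
            (𝓝 ((bc a n : ℂ) * ((1:ℝ) : ℂ) ^ n * w ^ n)) :=
          (hc.tendsto 1).mono_left nhdsWithin_le_nhds
        simpa using h2
      · filter_upwards [hIoo] with t htm n
        rw [norm_mul, norm_mul, norm_pow, norm_pow, hw, one_pow, mul_one, Complex.norm_real,
          Complex.norm_real, Real.norm_eq_abs, Real.norm_eq_abs]
        calc |bc a n| * |t| ^ n ≤ |bc a n| * 1 ^ n := by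
              gcongr
              rw [_root_.abs_of_nonneg htm.1.le]
              exact htm.2.le
          _ = |bc a n| := by simp
    have T2 : Tendsto (fun t : ℝ => Sf a w t) (𝓝[<] (1 : ℝ)) (𝓝 ((1 + w) ^ (a : ℂ))) := by
      have hcont : Tendsto (fun t : ℝ => (1 + (t : ℂ) * w) ^ (a : ℂ)) (𝓝[<] (1 : ℝ))
          (𝓝 ((1 + w) ^ (a : ℂ))) := by
        have hc1 : ContinuousAt (fun t : ℝ => 1 + (t : ℂ) * w) 1 := by fun_prop
        have hc2 : ContinuousAt (fun z : ℂ => z ^ (a : ℂ)) (1 + ((1:ℝ) : ℂ) * w) := by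
          simpa using continuousAt_cpow_const (a := 1 + w) (b := (a : ℂ)) hw1
        have hc3 : ContinuousAt ((fun z : ℂ => z ^ (a : ℂ)) ∘ (fun t : ℝ => 1 + (t : ℂ) * w)) 1 :=
          ContinuousAt.comp (by simpa using hc2) hc1
        have h4 : Tendsto ((fun z : ℂ => z ^ (a : ℂ)) ∘ (fun t : ℝ => 1 + (t : ℂ) * w)) (𝓝[<] (1:ℝ))
            (𝓝 ((1 + ((1:ℝ) : ℂ) * w) ^ (a : ℂ))) := by
          have := hc3.tendsto.mono_left (nhdsWithin_le_nhds (s := Set.Iio (1:ℝ)))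
          simpa [Function.comp_def] using this
        simpa [Function.comp_def] using h4
      apply hcont.congr'
      filter_upwards [hIoo] with t htm
      exact (Sf_eq_cpow ha0 ha1 hw htm.1.le htm.2).symm
    exact tendsto_nhds_unique T1 T2
  exact key ▸ hsum.hasSum

end ComplexSeries

lemma keyHasSum {a θ : ℝ} (ha0 : 0 ≤ a) (ha1 : a < 1) (hθ : θ ∈ Set.Ioo (-(Real.pi/2)) (Real.pi/2)) :
    HasSum (fun n : ℕ => bc a n * Real.cos (2 * n * θ))
      ((2 * Real.cos θ) ^ a * Real.cos (a * θ)) := by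
  have hc : 0 < Real.cos θ := Real.cos_pos_of_mem_Ioo hθ
  set c := Real.cos θ with hcdef
  set s := Real.sin θ with hsdef
  set w : ℂ := Complex.exp (((2 * θ : ℝ) : ℂ) * Complex.I) with hwdef
  have hw : ‖w‖ = 1 := by
    rw [hwdef, Complex.norm_exp_ofReal_mul_I]
  have he : Complex.exp ((θ : ℂ) * Complex.I) = (c : ℂ) + (s : ℂ) * Complex.I := by
    rw [Complex.exp_mul_I, hcdef, hsdef]
    push_cast [Complex.ofReal_cos, Complex.ofReal_sin]
    ring
  have hwe : w = Complex.exp ((θ : ℂ) * Complex.I) ^ 2 := by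
    rw [hwdef, ← Complex.exp_nat_mul]
    push_cast
    ring_nf
  have hpy : (s : ℂ) ^ 2 + (c : ℂ) ^ 2 = 1 := by
    have := Real.sin_sq_add_cos_sq θ
    rw [hsdef, hcdef]
    exact_mod_cast congrArg (fun x : ℝ => (x : ℂ)) this
  have h1w : (1 : ℂ) + w = ((2 * c : ℝ) : ℂ) * Complex.exp ((θ : ℂ) * Complex.I) := by
    rw [hwe, he]
    push_cast
    linear_combination (s : ℂ) ^ 2 * Complex.I_sq - hpy
  have hslit : (1 : ℂ) + w ∈ Complex.slitPlane := by
    rw [Complex.mem_slitPlane_iff]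
    left
    rw [h1w, he, Complex.re_ofReal_mul]
    simp only [Complex.add_re, Complex.ofReal_re, Complex.mul_re, Complex.I_re, Complex.I_im,
      Complex.ofReal_im, mul_zero, mul_one, zero_sub]
    nlinarith [hc]
  have hbin := hasSum_binomial ha0 ha1 hw hslit
  have hmap := hbin.mapL Complex.reCLM
  simp only [Complex.reCLM_apply] at hmap
  have hfun : (fun n : ℕ => ((bc a n : ℂ) * w ^ n).re)
      = fun n : ℕ => bc a n * Real.cos (2 * n * θ) := by
    funext n
    have hwn : w ^ n = Complex.exp (((2 * n * θ : ℝ) : ℂ) * Complex.I) := by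
      rw [hwdef, ← Complex.exp_nat_mul]
      congr 1
      push_cast
      ring
    rw [hwn, Complex.re_ofReal_mul, Complex.exp_ofReal_mul_I_re]
  have hθpi : -Real.pi < θ ∧ θ ≤ Real.pi := by
    have hpi := Real.pi_pos
    obtain ⟨h1, h2⟩ := hθ
    constructor <;> nlinarith
  have hval : ((1 + w) ^ (a : ℂ)).re = (2 * c) ^ a * Real.cos (a * θ) := by
    have hlog : (1 : ℂ) + w = Complex.exp (((Real.log (2 * c) : ℝ) : ℂ) + (θ : ℂ) * Complex.I) := by
      rw [h1w, Complex.exp_add, ← Complex.ofReal_exp, Real.exp_log (by linarith)]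
    rw [hlog, Complex.cpow_def_of_ne_zero (Complex.exp_ne_zero _),
      Complex.log_exp (by simpa using hθpi.1) (by simpa using hθpi.2), Complex.exp_re]
    simp only [Complex.add_re, Complex.mul_re, Complex.ofReal_re, Complex.ofReal_im,
      Complex.I_re, Complex.I_im, Complex.add_im, Complex.mul_im, mul_zero, mul_one,
      zero_mul, sub_zero, add_zero, zero_add, zero_sub]
    rw [Real.rpow_def_of_pos (by linarith : (0:ℝ) < 2 * c)]
    ring_nf
  rw [hfun, hval] at hmap
  exact hmap

namespace IntPart

noncomputable def m (x : ℝ) : ℝ := (4 - x ^ 2) ^ (-(1/2) : ℝ)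

lemma m_nonneg {x : ℝ} (hx : x ∈ Set.Ioc (-2:ℝ) 2) : 0 ≤ m x := by
  apply Real.rpow_nonneg
  nlinarith [hx.1, hx.2]

lemma m_contOn : ContinuousOn m (Set.Ioo (-2:ℝ) 2) := by
  apply ContinuousOn.rpow_const
  · fun_prop
  · intro x hx
    left
    nlinarith [hx.1, hx.2]

lemma m_int_half : IntervalIntegrable m volume 0 2 := by
  have base : IntervalIntegrable (fun x : ℝ => x ^ (-(1/2) : ℝ)) volume 0 2 :=
    intervalIntegral.intervalIntegrable_rpow' (by norm_num)
  have hg : IntervalIntegrable (fun x : ℝ => (2 - x) ^ (-(1/2) : ℝ)) volume 0 2 := by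
    have h2 := base.comp_sub_left 2
    simpa using h2.symm
  apply hg.mono_fun
  · rw [Set.uIoc_of_le (by norm_num : (0:ℝ) ≤ 2),
      ← MeasureTheory.Measure.restrict_congr_set MeasureTheory.Ioo_ae_eq_Ioc]
    exact ((m_contOn.mono (by intro x hx; exact ⟨by linarith [hx.1], hx.2⟩)).aestronglyMeasurable
      measurableSet_Ioo)
  · rw [Set.uIoc_of_le (by norm_num : (0:ℝ) ≤ 2)]
    filter_upwards [MeasureTheory.ae_restrict_mem measurableSet_Ioc] with x hx
    have hge : (0:ℝ) ≤ 4 - x^2 := by nlinarith [hx.1, hx.2]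
    have hge2 : (0:ℝ) ≤ 2 - x := by linarith [hx.2]
    unfold m
    rw [Real.norm_eq_abs, Real.norm_eq_abs, _root_.abs_of_nonneg (Real.rpow_nonneg hge _),
      _root_.abs_of_nonneg (Real.rpow_nonneg hge2 _)]
    rcases eq_or_lt_of_le hx.2 with h2 | h2
    · subst h2
      norm_num
    · apply Real.rpow_le_rpow_of_nonpos (by linarith) (by nlinarith [hx.1]) (by norm_num)

lemma m_int : IntervalIntegrable m volume (-2) 2 := by
  have h1 := (IntervalIntegrable.iff_comp_neg enorm_ne_top).mp m_int_half
  rw [neg_zero] at h1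
  have h2 : (fun x => m (-x)) = m := by
    funext x
    unfold m
    rw [neg_sq]
  rw [h2] at h1
  exact h1.symm.trans m_int_half

lemma hasDerivAt_asn {x : ℝ} (hx : x ∈ Set.Ioo (-2:ℝ) 2) :
    HasDerivAt (fun y : ℝ => Real.arcsin (y / 2)) (m x) x := by
  obtain ⟨h1, h2⟩ := hx
  have hne1 : x / 2 ≠ -1 := by intro h; nlinarith [h]
  have hne2 : x / 2 ≠ 1 := by intro h; nlinarith [h]
  have hD := (Real.hasDerivAt_arcsin hne1 hne2).comp x ((hasDerivAt_id x).div_const 2)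
  have h4 : (0:ℝ) < 4 - x ^ 2 := by nlinarith
  have hq : (0:ℝ) < 1 - (x/2) ^ 2 := by nlinarith
  convert hD using 1
  all_goals try rfl
  rw [m, Real.rpow_neg h4.le, ← Real.sqrt_eq_rpow]
  rw [show (4 - x^2 : ℝ) = 4 * (1 - (x/2)^2) by ring, Real.sqrt_mul (by norm_num : (0:ℝ) ≤ 4),
    show Real.sqrt 4 = 2 by
      rw [show (4:ℝ) = 2 ^ 2 by norm_num, Real.sqrt_sq (by norm_num : (0:ℝ) ≤ 2)]]
  have hsq : Real.sqrt (1 - (x/2)^2) > 0 := Real.sqrt_pos.2 hq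
  field_simp

lemma cos_term_int (b : ℝ) :
    IntervalIntegrable (fun x => Real.cos (b * Real.arcsin (x / 2)) * m x) volume (-2) 2 := by
  apply m_int.mono_fun
  · apply AEStronglyMeasurable.mul
    · exact ((Real.continuous_cos.comp
        ((continuous_const.mul (Real.continuous_arcsin.comp
          (continuous_id.div_const 2))))).aestronglyMeasurable)
    · rw [Set.uIoc_of_le (by norm_num : (-2:ℝ) ≤ 2),
        ← MeasureTheory.Measure.restrict_congr_set MeasureTheory.Ioo_ae_eq_Ioc]
      exact m_contOn.aestronglyMeasurable measurableSet_Ioo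
  · rw [Set.uIoc_of_le (by norm_num : (-2:ℝ) ≤ 2)]
    filter_upwards [MeasureTheory.ae_restrict_mem measurableSet_Ioc] with x hx
    have hm := m_nonneg hx
    rw [Real.norm_eq_abs, Real.norm_eq_abs, _root_.abs_mul]
    calc |Real.cos (b * Real.arcsin (x/2))| * |m x| ≤ 1 * |m x| := by
          gcongr
          exact Real.abs_cos_le_one _
      _ = |m x| := one_mul _

lemma J0 : ∫ x in (-2:ℝ)..2, m x = Real.pi := by
  rw [intervalIntegral.integral_eq_sub_of_hasDerivAt_of_le (by norm_num)
    ((Real.continuous_arcsin.comp (continuous_id.div_const 2)).continuousOn)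
    (fun x hx => hasDerivAt_asn hx) m_int]
  norm_num [Real.arcsin_one, Real.arcsin_neg_one]

lemma Jn (n : ℕ) (hn : n ≠ 0) :
    ∫ x in (-2:ℝ)..2, Real.cos (2 * n * Real.arcsin (x / 2)) * m x = 0 := by
  have h2n : (0:ℝ) < 2 * n := by positivity
  have hcont : ContinuousOn (fun y : ℝ => Real.sin (2 * n * Real.arcsin (y / 2)) / (2 * n))
      (Set.Icc (-2) 2) :=
    ((Real.continuous_sin.comp (continuous_const.mul
      (Real.continuous_arcsin.comp (continuous_id.div_const 2)))).div_const _).continuousOn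
  have hderiv : ∀ x ∈ Set.Ioo (-2:ℝ) 2,
      HasDerivAt (fun y : ℝ => Real.sin (2 * n * Real.arcsin (y / 2)) / (2 * n))
        (Real.cos (2 * n * Real.arcsin (x / 2)) * m x) x := by
    intro x hx
    have hD := (((hasDerivAt_asn hx).const_mul ((2 * n : ℝ))).sin).div_const (2 * n)
    convert hD using 1
    all_goals try rfl
    field_simp
  rw [intervalIntegral.integral_eq_sub_of_hasDerivAt_of_le (by norm_num)
    hcont hderiv (cos_term_int (2 * n))]
  norm_num [Real.arcsin_one, Real.arcsin_neg_one]
  have e1 : (2:ℝ) * n * (Real.pi / 2) = n * Real.pi := by ring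
  rw [e1, Real.sin_nat_mul_pi]
  simp

lemma integral_main {a : ℝ} (ha0 : 0 ≤ a) (ha1 : a < 1) :
    ∫ x in (-2:ℝ)..2, Real.cos (a * Real.arcsin (x / 2)) * (4 - x ^ 2) ^ ((a - 1) / 2)
      = Real.pi := by
  have hmIoo : MeasureTheory.IntegrableOn m (Set.Ioo (-2:ℝ) 2) volume := by
    have h := (intervalIntegrable_iff_integrableOn_Ioc_of_le (by norm_num : (-2:ℝ) ≤ 2)).1 m_int
    exact h.mono_set Set.Ioo_subset_Ioc_self
  set g : ℕ → ℝ → ℝ := fun n x => bc a n * Real.cos (2 * n * Real.arcsin (x / 2)) * m x with hg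
  have hpt : ∀ x ∈ Set.Ioo (-2:ℝ) 2,
      Real.cos (a * Real.arcsin (x / 2)) * (4 - x ^ 2) ^ ((a - 1) / 2) = ∑' n, g n x := by
    intro x hx
    obtain ⟨hx1, hx2⟩ := hx
    have h4 : (0:ℝ) < 4 - x ^ 2 := by nlinarith
    have hθ : Real.arcsin (x / 2) ∈ Set.Ioo (-(Real.pi/2)) (Real.pi/2) := by
      constructor
      · exact Real.neg_pi_div_two_lt_arcsin.2 (by linarith)
      · exact Real.arcsin_lt_pi_div_two.2 (by linarith)
    have hkey := keyHasSum ha0 ha1 hθ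
    have hmul := hkey.mul_right (m x)
    have hid : (4 - x ^ 2) ^ ((a - 1) / 2)
        = (2 * Real.cos (Real.arcsin (x / 2))) ^ a * m x := by
      have h2c : 2 * Real.cos (Real.arcsin (x/2)) = Real.sqrt (4 - x^2) := by
        rw [Real.cos_arcsin, show (4 - x^2 : ℝ) = 4 * (1 - (x/2)^2) by ring,
          Real.sqrt_mul (by norm_num : (0:ℝ) ≤ 4),
          show Real.sqrt 4 = 2 by
            rw [show (4:ℝ) = 2^2 by norm_num, Real.sqrt_sq (by norm_num : (0:ℝ) ≤ 2)]]
      rw [h2c, Real.sqrt_eq_rpow, ← Real.rpow_mul h4.le]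
      unfold m
      rw [← Real.rpow_add h4]
      congr 1
      ring
    calc Real.cos (a * Real.arcsin (x / 2)) * (4 - x ^ 2) ^ ((a - 1) / 2)
        = (2 * Real.cos (Real.arcsin (x / 2))) ^ a * Real.cos (a * Real.arcsin (x / 2)) * m x := by
          rw [hid]; ring
      _ = ∑' n, g n x := hmul.tsum_eq.symm
  rw [intervalIntegral.integral_of_le (by norm_num : (-2:ℝ) ≤ 2),
    MeasureTheory.integral_Ioc_eq_integral_Ioo,
    MeasureTheory.setIntegral_congr_fun measurableSet_Ioo (fun x hx => hpt x hx)]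
  have hbound : ∀ n : ℕ, ∀ᵐ x ∂(volume.restrict (Set.Ioo (-2:ℝ) 2)),
      ‖g n x‖ ≤ |bc a n| * m x := by
    intro n
    filter_upwards [MeasureTheory.ae_restrict_mem measurableSet_Ioo] with x hx
    have hm : 0 ≤ m x := m_nonneg ⟨hx.1, hx.2.le⟩
    rw [hg]
    simp only []
    rw [Real.norm_eq_abs, _root_.abs_mul, _root_.abs_mul, _root_.abs_of_nonneg hm]
    have hcos := Real.abs_cos_le_one (2 * n * Real.arcsin (x / 2))
    calc |bc a n| * |Real.cos (2 * n * Real.arcsin (x / 2))| * m x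
        ≤ |bc a n| * 1 * m x := by gcongr
      _ = |bc a n| * m x := by ring
  have hgmeas : ∀ n : ℕ, MeasureTheory.AEStronglyMeasurable (g n)
      (volume.restrict (Set.Ioo (-2:ℝ) 2)) := by
    intro n
    apply MeasureTheory.AEStronglyMeasurable.mul
    · exact (continuous_const.mul (Real.continuous_cos.comp
        (continuous_const.mul (Real.continuous_arcsin.comp
          (continuous_id.div_const 2))))).aestronglyMeasurable
    · exact m_contOn.aestronglyMeasurable measurableSet_Ioo
  have hgint : ∀ n : ℕ, MeasureTheory.Integrable (g n) (volume.restrict (Set.Ioo (-2:ℝ) 2)) :=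
    fun n => MeasureTheory.Integrable.mono' (hmIoo.const_mul |bc a n|) (hgmeas n) (hbound n)
  have hnorm_sum : Summable (fun n => ∫ x in Set.Ioo (-2:ℝ) 2, ‖g n x‖) := by
    apply Summable.of_nonneg_of_le
      (fun n => MeasureTheory.integral_nonneg (fun x => norm_nonneg _)) (fun n => ?_)
      ((summable_abs_bc ha0 ha1).mul_right (∫ x in Set.Ioo (-2:ℝ) 2, m x))
    have heq : ∫ x in Set.Ioo (-2:ℝ) 2, |bc a n| * m x
        = |bc a n| * ∫ x in Set.Ioo (-2:ℝ) 2, m x := by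
      exact MeasureTheory.integral_const_mul _ _
    rw [← heq]
    exact MeasureTheory.integral_mono_of_nonneg
      (Filter.Eventually.of_forall fun x => norm_nonneg _)
      (hmIoo.const_mul _) (hbound n)
  rw [← MeasureTheory.integral_tsum_of_summable_integral_norm hgint hnorm_sum]
  have hval : ∀ n : ℕ, (∫ x in Set.Ioo (-2:ℝ) 2, g n x) = if n = 0 then Real.pi else 0 := by
    intro n
    have hconv : (∫ x in Set.Ioo (-2:ℝ) 2, g n x) = ∫ x in (-2:ℝ)..2, g n x := by
      rw [intervalIntegral.integral_of_le (by norm_num : (-2:ℝ) ≤ 2),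
        MeasureTheory.integral_Ioc_eq_integral_Ioo]
    rw [hconv]
    by_cases hn : n = 0
    · subst hn
      rw [if_pos rfl, hg]
      simp only [Nat.cast_zero, mul_zero, zero_mul, Real.cos_zero, bc_zero, one_mul, mul_one]
      exact J0
    · rw [if_neg hn, hg]
      have hassoc : (fun x => bc a n * Real.cos (2 * n * Real.arcsin (x / 2)) * m x)
          = fun x => bc a n * (Real.cos (2 * n * Real.arcsin (x / 2)) * m x) := by
        funext x; ring
      rw [hassoc, intervalIntegral.integral_const_mul, Jn n hn, mul_zero]
  rw [tsum_congr hval]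
  exact tsum_ite_eq 0 (fun _ => Real.pi)

end IntPart

theorem stmt_9 (l : ℝ) (hl : 1 ≤ l) :
    ∫ x in (-2 : ℝ)..2, Real.cos ((1 - 1 / l) * Real.arcsin (x / 2)) *
        (4 - x ^ 2) ^ (-(1 / (2 * l))) =
      (2 : ℝ) ^ (1 - 1 / l) * Real.sqrt Real.pi * Real.Gamma (1 - 1 / (2 * l)) *
        Real.Gamma (3 / 2 - 1 / (2 * l)) / Real.Gamma (2 - 1 / l) := by
  have hl0 : 0 < l := by linarith
  have hinv1 : 1 / l ≤ 1 := by rw [div_le_one hl0]; linarith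
  have hinv0 : 0 < 1 / l := by positivity
  have ha0 : 0 ≤ 1 - 1 / l := by linarith
  have ha1 : 1 - 1 / l < 1 := by linarith
  have hexp : -(1 / (2 * l)) = ((1 - 1 / l) - 1) / 2 := by
    field_simp
    ring
  have hLHS : (∫ x in (-2 : ℝ)..2, Real.cos ((1 - 1 / l) * Real.arcsin (x / 2)) *
      (4 - x ^ 2) ^ (-(1 / (2 * l)))) = Real.pi := by
    simp only [hexp]
    exact IntPart.integral_main ha0 ha1
  rw [hLHS]
  have h1 := Real.Gamma_mul_Gamma_add_half (1 - 1 / (2 * l))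
  have e1 : (1:ℝ) - 1 / (2 * l) + 1 / 2 = 3 / 2 - 1 / (2 * l) := by ring
  have e2 : 2 * ((1:ℝ) - 1 / (2 * l)) = 2 - 1 / l := by
    field_simp
  rw [e1, e2] at h1
  have e3 : (1:ℝ) - (2 - 1 / l) = 1 / l - 1 := by ring
  rw [e3] at h1
  have hΓpos : 0 < Real.Gamma (2 - 1 / l) := Real.Gamma_pos_of_pos (by linarith)
  rw [eq_div_iff (ne_of_gt hΓpos)]
  have hp : (2:ℝ) ^ ((1:ℝ) - 1 / l) * (2:ℝ) ^ ((1:ℝ) / l - 1) = 1 := by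
    rw [← Real.rpow_add (by norm_num : (0:ℝ) < 2),
      show (1:ℝ) - 1 / l + (1 / l - 1) = 0 by ring, Real.rpow_zero]
  have hs : Real.sqrt Real.pi * Real.sqrt Real.pi = Real.pi :=
    Real.mul_self_sqrt Real.pi_pos.le
  calc Real.pi * Real.Gamma (2 - 1 / l)
      = Real.pi * Real.Gamma (2 - 1 / l) * ((2:ℝ) ^ ((1:ℝ) - 1 / l) * (2:ℝ) ^ ((1:ℝ) / l - 1)) := by
        rw [hp, mul_one]
    _ = (2:ℝ) ^ ((1:ℝ) - 1 / l) * Real.sqrt Real.pi *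
        (Real.Gamma (1 - 1 / (2 * l)) * Real.Gamma (3 / 2 - 1 / (2 * l))) := by
        rw [h1]
        linear_combination (-(Real.Gamma (2 - 1 / l) * (2:ℝ) ^ ((1:ℝ) - 1 / l) *
          (2:ℝ) ^ ((1:ℝ) / l - 1))) * hs
    _ = (2:ℝ) ^ ((1:ℝ) - 1 / l) * Real.sqrt Real.pi * Real.Gamma (1 - 1 / (2 * l)) *
        Real.Gamma (3 / 2 - 1 / (2 * l)) := by ring
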